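/- The operators T_i defined by T_i f = c(α_i)⁻¹ (s_i f - f) satisfy T_i² = β T_i, under the assumptions that s_i is an algebra involution fixing f ↦ f and s_i(c(α_i)) = ⊖c(α_i) = -c(α_i)/(1+βc(α_i)). -/
import Mathlib

/-- The operators `T_i f = c(α_i)⁻¹ (s_i f - f)` satisfy `T_i² = β T_i`,
in the abstract setting: `A` a commutative ring (algebra over `ℚ(β)` in the application),
`s : A → A` a ring involution fixing `β`, `c = c(α_i)` invertible with `1 + βc`
invertible, and `s(c) = ⊖c(α_i) = -c/(1+βc)` (i.e. `s(c)·(1+βc) = -c`). -/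
theorem stmt_16 {A : Type*} [CommRing A] (β : A) (s : A →+* A)
    (hinv : ∀ f, s (s f) = f) (hsβ : s β = β)
    (c c' d' : A) (hc : c * c' = 1) (hd : (1 + β * c) * d' = 1)
    (hsc : s c * (1 + β * c) = -c)
    (T : A → A) (hT : ∀ f, T f = c' * (s f - f)) :
    ∀ f, T (T f) = β * T f := by
  have h1 : s c * (-(1 + β * c) * c') = 1 := by
    have : s c * (-(1 + β * c) * c') = -(s c * (1 + β * c)) * c' := by ring
    rw [this, hsc]; rw [neg_neg]; exact hc
  have h2 : s c * s c' = 1 := by rw [← map_mul, hc, map_one]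
  have hsc' : s c' = -(1 + β * c) * c' := by
    calc s c' = s c' * (s c * (-(1 + β * c) * c')) := by rw [h1, mul_one]
    _ = (s c * s c') * (-(1 + β * c) * c') := by ring
    _ = -(1 + β * c) * c' := by rw [h2, one_mul]
  intro f
  rw [hT, hT, map_mul, map_sub, hinv, hsc']
  linear_combination β * c' * (s f - f) * hc
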